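/- For a > 0, the Turán-type inequality I_0(a) I_2(a) < I_1(a)² holds, where I_n is the modified Bessel function of the first kind of order n. -/

import Mathlib

open Real

/-- The modified Bessel function of the first kind of integer order `n`,
`I_n(a) = (1/π) ∫_0^π e^{a cos θ} cos(nθ) dθ`. -/
noncomputable def besselI (n : ℕ) (a : ℝ) : ℝ :=
  (1 / π) * ∫ θ in (0 : ℝ)..π, Real.exp (a * Real.cos θ) * Real.cos (n * θ)

namespace TuranAux
open intervalIntegral MeasureTheory Finset

/-- `T k n = ∫_0^π cos^k θ cos(nθ)`. -/
noncomputable def T (k n : ℕ) : ℝ := ∫ θ in (0:ℝ)..π, (Real.cos θ)^k * Real.cos (n * θ)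

lemma contF (k n : ℕ) : Continuous (fun θ : ℝ => (Real.cos θ)^k * Real.cos (n * θ)) := by
  fun_prop

lemma contInt (k n : ℕ) (c d : ℝ) :
    IntervalIntegrable (fun θ : ℝ => (Real.cos θ)^k * Real.cos (n * θ)) volume c d :=
  (contF k n).intervalIntegrable _ _

lemma T_zero_zero : T 0 0 = π := by simp [T]

lemma T_zero_succ (n : ℕ) : T 0 (n+1) = 0 := by
  have h : ((n:ℝ)+1) ≠ 0 := by positivity
  have : T 0 (n+1) = ∫ θ in (0:ℝ)..π, Real.cos (((n:ℝ)+1) * θ) := by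
    simp [T]
  rw [this, integral_comp_mul_left (fun x => Real.cos x) h]
  simp only [mul_zero, integral_cos, Real.sin_zero, sub_zero, smul_eq_mul]
  have : ((n:ℝ)+1) * π = ((n+1:ℕ):ℝ) * π := by push_cast; ring
  rw [this, Real.sin_nat_mul_pi, mul_zero]

lemma T_succ_zero (k : ℕ) : T (k+1) 0 = T k 1 := by
  unfold T
  apply intervalIntegral.integral_congr
  intro θ _
  simp [pow_succ]

lemma T_succ_succ (k n : ℕ) : T (k+1) (n+1) = (T k n + T k (n+2))/2 := by
  have key : ∀ θ : ℝ, (Real.cos θ)^(k+1) * Real.cos (((n+1:ℕ):ℝ) * θ)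
      = ((Real.cos θ)^k * Real.cos ((n:ℕ) * θ) + (Real.cos θ)^k * Real.cos (((n+2:ℕ):ℝ) * θ))/2 := by
    intro θ
    have h2 : Real.cos (((n:ℝ)+1)*θ + θ) + Real.cos (((n:ℝ)+1)*θ - θ)
        = 2 * (Real.cos (((n:ℝ)+1)*θ) * Real.cos θ) := by
      rw [Real.cos_add, Real.cos_sub]; ring
    have e1 : ((n:ℝ)+1)*θ + θ = ((n:ℝ)+2)*θ := by ring
    have e2 : ((n:ℝ)+1)*θ - θ = (n:ℝ)*θ := by ring
    rw [e1, e2] at h2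
    push_cast
    rw [pow_succ]
    linear_combination (-(cos θ ^ k) / 2) * h2
  unfold T
  rw [intervalIntegral.integral_congr (g := fun θ => ((Real.cos θ)^k * Real.cos ((n:ℕ) * θ)
      + (Real.cos θ)^k * Real.cos (((n+2:ℕ):ℝ) * θ))/2) (fun θ _ => key θ)]
  rw [intervalIntegral.integral_div, intervalIntegral.integral_add (contInt k n 0 π) (contInt k (n+2) 0 π)]


/-- Closed form for the coefficient of `T`. -/
noncomputable def C (k n : ℕ) : ℝ :=
  if n ≤ k ∧ (k - n) % 2 = 0 then (k.choose ((k-n)/2) : ℝ) else 0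

lemma C_rec_zero (k : ℕ) : C (k+1) 0 = 2 * C k 1 := by
  unfold C
  rcases Nat.even_or_odd k with ⟨r, rfl⟩ | ⟨r, rfl⟩
  · rw [if_neg (by omega), if_neg (by omega)]; ring
  · rw [if_pos (by omega), if_pos (by omega)]
    have e1 : (2*r+1+1-0)/2 = r+1 := by omega
    have e2 : (2*r+1-1)/2 = r := by omega
    rw [e1, e2]
    have : (2*r+1+1).choose (r+1) = (2*r+1).choose r + (2*r+1).choose (r+1) :=
      Nat.choose_succ_succ' (2*r+1) r
    have hsymm : (2*r+1).choose (r+1) = (2*r+1).choose r := by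
      have := Nat.choose_symm (n := 2*r+1) (k := r+1) (by omega)
      simpa [show 2*r+1-(r+1) = r by omega] using this.symm
    rw [this, hsymm]
    push_cast
    ring

lemma C_rec_succ (k n : ℕ) : C (k+1) (n+1) = C k n + C k (n+2) := by
  unfold C
  by_cases h1 : n ≤ k
  · by_cases h2 : (k - n) % 2 = 0
    · by_cases h3 : n + 2 ≤ k
      · rw [if_pos (by omega), if_pos ⟨h1, h2⟩, if_pos ⟨h3, by omega⟩]
        obtain ⟨j, hjj⟩ : ∃ j, (k-n)/2 = j + 1 := ⟨(k-n)/2 - 1, by omega⟩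
        have e1 : (k+1-(n+1))/2 = j+1 := by omega
        have e2 : (k-(n+2))/2 = j := by omega
        rw [e1, e2, hjj]
        have : (k+1).choose (j+1) = k.choose j + k.choose (j+1) :=
          Nat.choose_succ_succ' k j
        rw [this]
        push_cast
        ring
      · have hk : k = n := by omega
        subst hk
        rw [if_pos (by omega), if_pos ⟨h1, h2⟩, if_neg (by omega)]
        simp
    · rw [if_neg (by omega), if_neg (by omega), if_neg (by omega)]; ring
  · rw [if_neg (by omega), if_neg (by omega), if_neg (by omega)]; ring

lemma T_eq (k : ℕ) : ∀ n, T k n = π / 2^k * C k n := by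
  induction k with
  | zero =>
    intro n
    cases n with
    | zero => simp [T_zero_zero, C]
    | succ n => simp [T_zero_succ, C]
  | succ k ih =>
    intro n
    cases n with
    | zero =>
      rw [T_succ_zero, ih 1, C_rec_zero, pow_succ]
      ring
    | succ n =>
      rw [T_succ_succ, ih n, ih (n+2), C_rec_succ, pow_succ]
      ring



lemma besselI_eq_tsum (n : ℕ) {a : ℝ} (ha : 0 < a) :
    besselI n a = ∑' m : ℕ, (a/2)^(2*m+n)/((m.factorial : ℝ) * (m+n).factorial) := by
  have hF : ∀ k : ℕ, Integrable (fun θ : ℝ => (a*Real.cos θ)^k / (k.factorial : ℝ) * Real.cos (n*θ))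
      (volume.restrict (Set.Ioc (0:ℝ) π)) := by
    intro k
    apply Continuous.integrableOn_Ioc
    fun_prop
  have hbound : ∀ k : ℕ, (∫ θ in Set.Ioc (0:ℝ) π,
      ‖(a*Real.cos θ)^k / (k.factorial : ℝ) * Real.cos (n*θ)‖) ≤ π * (a^k / k.factorial) := by
    intro k
    have h1 : ∀ θ ∈ Set.Ioc (0:ℝ) π, ‖(a*Real.cos θ)^k / (k.factorial : ℝ) * Real.cos (n*θ)‖
        ≤ a^k / k.factorial := by
      intro θ _
      rw [norm_mul, norm_div]
      have hc : ‖Real.cos (n*θ)‖ ≤ 1 := by rw [Real.norm_eq_abs]; exact Real.abs_cos_le_one _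
      have hp : ‖(a*Real.cos θ)^k‖ ≤ a^k := by
        rw [norm_pow]
        apply pow_le_pow_left₀ (norm_nonneg _)
        rw [norm_mul, Real.norm_eq_abs, Real.norm_eq_abs, abs_of_pos ha]
        nlinarith [Real.abs_cos_le_one θ, abs_nonneg (Real.cos θ), ha.le]
      have hk : ‖(k.factorial : ℝ)‖ = (k.factorial : ℝ) := by
        rw [Real.norm_eq_abs, abs_of_pos]; exact_mod_cast k.factorial_pos
      rw [hk]
      calc ‖(a*Real.cos θ)^k‖ / (k.factorial:ℝ) * ‖Real.cos (n*θ)‖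
          ≤ ‖(a*Real.cos θ)^k‖ / (k.factorial:ℝ) * 1 := by
            apply mul_le_mul_of_nonneg_left hc (by positivity)
        _ = ‖(a*Real.cos θ)^k‖ / (k.factorial:ℝ) := mul_one _
        _ ≤ a^k / k.factorial := by gcongr
    calc (∫ θ in Set.Ioc (0:ℝ) π, ‖(a*Real.cos θ)^k / (k.factorial : ℝ) * Real.cos (n*θ)‖)
        ≤ ∫ _θ in Set.Ioc (0:ℝ) π, (a^k / k.factorial : ℝ) := by
          apply MeasureTheory.setIntegral_mono_on (hF k).norm (integrableOn_const (C := (a^k / k.factorial : ℝ)) (s := Set.Ioc (0:ℝ) π) (μ := volume) (by simp [Real.volume_Ioc]))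
            measurableSet_Ioc h1
      _ = π * (a^k / k.factorial) := by
          simp [Real.volume_Ioc, Real.pi_pos.le, smul_eq_mul]
  have hsum : Summable (fun k : ℕ => ∫ θ in Set.Ioc (0:ℝ) π,
      ‖(a*Real.cos θ)^k / (k.factorial : ℝ) * Real.cos (n*θ)‖) :=
    Summable.of_nonneg_of_le (fun k => integral_nonneg fun θ => norm_nonneg _) hbound
      ((Real.summable_pow_div_factorial a).mul_left π)
  have hswap := MeasureTheory.integral_tsum_of_summable_integral_norm hF hsum
  have hptwise : ∀ θ : ℝ, (∑' k : ℕ, (a*Real.cos θ)^k / (k.factorial : ℝ) * Real.cos (n*θ))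
      = Real.exp (a*Real.cos θ) * Real.cos (n*θ) := by
    intro θ
    rw [tsum_mul_right]
    congr 1
    rw [Real.exp_eq_exp_ℝ, NormedSpace.exp_eq_tsum_div]
  -- each piece integral equals a^k/k! * T k n
  have hpiece : ∀ k : ℕ, (∫ θ in Set.Ioc (0:ℝ) π, (a*Real.cos θ)^k / (k.factorial : ℝ) * Real.cos (n*θ))
      = a^k / k.factorial * T k n := by
    intro k
    rw [← intervalIntegral.integral_of_le Real.pi_pos.le]
    rw [show (fun θ : ℝ => (a*Real.cos θ)^k / (k.factorial : ℝ) * Real.cos (n*θ))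
        = (fun θ : ℝ => (a^k / (k.factorial : ℝ)) * ((Real.cos θ)^k * Real.cos (n*θ))) from by
      funext θ; rw [mul_pow]; ring]
    rw [intervalIntegral.integral_const_mul]
    rfl
  have step1 : besselI n a = (1/π) * ∑' k : ℕ, a^k / k.factorial * T k n := by
    unfold besselI
    congr 1
    rw [intervalIntegral.integral_of_le Real.pi_pos.le]
    have heq : (fun θ : ℝ => Real.exp (a*Real.cos θ) * Real.cos (n*θ))
        = fun θ : ℝ => ∑' k : ℕ, (a*Real.cos θ)^k / (k.factorial : ℝ) * Real.cos (n*θ) :=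
      funext fun θ => (hptwise θ).symm
    rw [heq, ← hswap]
    exact tsum_congr hpiece
  have hC : ∀ m : ℕ, C (2*m+n) n = ((2*m+n).choose m : ℝ) := by
    intro m
    unfold C
    rw [if_pos ⟨by omega, by omega⟩]
    congr 2
    omega
  have hsupp : Function.support (fun k => a^k / (k.factorial:ℝ) * T k n)
      ⊆ Set.range (fun m : ℕ => 2*m+n) := by
    intro k hk
    by_contra hr
    apply hk
    have hC0 : C k n = 0 := by
      unfold C
      rw [if_neg]
      rintro ⟨h1, h2⟩
      exact hr ⟨(k-n)/2, by show 2*((k-n)/2)+n = k; omega⟩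
    show a^k/(k.factorial:ℝ) * T k n = 0
    rw [T_eq, hC0]
    ring
  have hinj : Function.Injective (fun m : ℕ => 2*m+n) := fun x y h => by dsimp at h; omega
  rw [step1, ← hinj.tsum_eq hsupp, ← tsum_mul_left]
  apply tsum_congr
  intro m
  rw [T_eq, hC m]
  have hnat : ((2*m+n).choose m : ℝ) * m.factorial * (m+n).factorial = ((2*m+n).factorial : ℝ) := by
    have h := Nat.add_choose_mul_factorial_mul_factorial m (m+n)
    rw [show m+(m+n) = 2*m+n by ring] at h
    have h' : (2*m+n).choose m = (2*m+n).choose (m+n) := by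
      rw [← Nat.choose_symm (show m+n ≤ 2*m+n by omega)]
      congr 1
      omega
    rw [h']
    exact_mod_cast congrArg (Nat.cast (R := ℝ)) h
  rw [div_pow]
  have hπ : (π:ℝ) ≠ 0 := Real.pi_ne_zero
  have hf1 : ((2*m+n).factorial : ℝ) ≠ 0 := by exact_mod_cast (2*m+n).factorial_ne_zero
  have hf2 : (m.factorial : ℝ) ≠ 0 := by exact_mod_cast m.factorial_ne_zero
  have hf3 : ((m+n).factorial : ℝ) ≠ 0 := by exact_mod_cast (m+n).factorial_ne_zero
  have h2 : ((2:ℝ)^(2*m+n)) ≠ 0 := by positivity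
  field_simp
  linear_combination hnat

lemma summable_bessel_norm {x : ℝ} (hx : 0 < x) (n : ℕ) :
    Summable (fun m : ℕ => ‖x^(2*m+n)/((m.factorial:ℝ) * (m+n).factorial)‖) := by
  have hrw : (fun m : ℕ => ‖x^(2*m+n)/((m.factorial:ℝ) * (m+n).factorial)‖)
      = fun m : ℕ => x^(2*m+n)/((m.factorial:ℝ) * (m+n).factorial) := by
    funext m
    exact Real.norm_of_nonneg (by positivity)
  rw [hrw]
  apply Summable.of_nonneg_of_le (fun m => by positivity) (fun m => ?_)
    ((Real.summable_pow_div_factorial (x^2)).mul_left (x^n))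
  have e : x^(2*m+n) = x^n * (x^2)^m := by rw [← pow_mul, ← pow_add]; ring_nf
  rw [e, mul_div_assoc]
  have hle : (m.factorial:ℝ) ≤ (m.factorial:ℝ) * (m+n).factorial :=
    le_mul_of_one_le_right (by positivity) (by exact_mod_cast (m+n).factorial_pos)
  gcongr

-- the two Vandermonde-type Nat identities
lemma vand1 (k : ℕ) :
    ∑ m ∈ range (k+1), (k+1).choose m * (k+1).choose (m+1) = (2*k+2).choose k := by
  have h := Nat.add_choose_eq (k+1) (k+1) k
  rw [show k+1+(k+1) = 2*k+2 by ring] at h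
  rw [h, Finset.Nat.sum_antidiagonal_eq_sum_range_succ_mk]
  apply Finset.sum_congr rfl
  intro m hm
  have hmk : m ≤ k := by simpa using Nat.lt_succ_iff.mp (Finset.mem_range.mp hm)
  congr 1
  have := Nat.choose_symm (show m+1 ≤ k+1 by omega) (n := k+1)
  rw [show k+1-(m+1) = k-m by omega] at this
  exact this.symm

lemma vand2 (k : ℕ) :
    ∑ m ∈ range (k+1), k.choose m * (k+2).choose m = (2*k+2).choose k := by
  have hsym : (2*k+2).choose k = (2*k+2).choose (k+2) := by
    have := Nat.choose_symm (show k+2 ≤ 2*k+2 by omega) (n := 2*k+2)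
    rw [show 2*k+2-(k+2) = k by omega] at this
    exact this
  have h := Nat.add_choose_eq k (k+2) (k+2)
  rw [show k+(k+2) = 2*k+2 by ring, Finset.Nat.sum_antidiagonal_eq_sum_range_succ_mk] at h
  rw [hsym, h]
  symm
  rw [show (k+2).succ = (k+1)+1+1 from rfl]
  rw [Finset.sum_range_succ]
  rw [Finset.sum_range_succ (n := k+1)]
  dsimp only
  rw [Nat.choose_eq_zero_of_lt (show k < k+1 by omega),
      Nat.choose_eq_zero_of_lt (show k < k+1+1 by omega)]
  simp only [Nat.zero_mul, zero_mul, add_zero]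
  apply Finset.sum_congr rfl
  intro m hm
  have hmk : m ≤ k := Nat.lt_succ_iff.mp (Finset.mem_range.mp hm)
  congr 1
  have h3 := Nat.choose_symm (show m ≤ k+2 by omega) (n := k+2)
  omega

end TuranAux

open TuranAux Finset in
theorem turan_inequality_besselI (a : ℝ) (ha : 0 < a) :
    besselI 0 a * besselI 2 a < besselI 1 a ^ 2 := by
  set x := a/2 with hxdef
  have hx : 0 < x := by positivity
  set f0 : ℕ → ℝ := fun m => x^(2*m+0)/((m.factorial:ℝ) * (m+0).factorial) with hf0
  set f1 : ℕ → ℝ := fun m => x^(2*m+1)/((m.factorial:ℝ) * (m+1).factorial) with hf1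
  set f2 : ℕ → ℝ := fun m => x^(2*m+2)/((m.factorial:ℝ) * (m+2).factorial) with hf2
  have hs0 := summable_bessel_norm hx 0
  have hs1 := summable_bessel_norm hx 1
  have hs2 := summable_bessel_norm hx 2
  have hc1 : besselI 1 a ^ 2 = ∑' k : ℕ, ∑ kl ∈ Finset.HasAntidiagonal.antidiagonal k, f1 kl.1 * f1 kl.2 := by
    rw [sq, besselI_eq_tsum 1 ha]
    exact tsum_mul_tsum_eq_tsum_sum_antidiagonal_of_summable_norm hs1 hs1
  have hc0 : besselI 0 a * besselI 2 a
      = ∑' k : ℕ, ∑ kl ∈ Finset.HasAntidiagonal.antidiagonal k, f0 kl.1 * f2 kl.2 := by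
    rw [besselI_eq_tsum 0 ha, besselI_eq_tsum 2 ha]
    exact tsum_mul_tsum_eq_tsum_sum_antidiagonal_of_summable_norm hs0 hs2
  -- closed forms for the Cauchy coefficients
  have hP : ∀ k : ℕ, ∑ kl ∈ Finset.HasAntidiagonal.antidiagonal k, f1 kl.1 * f1 kl.2
      = x^(2*k+2) * ((2*k+2).choose k : ℝ) / (((k+1).factorial:ℝ) * (k+1).factorial) := by
    intro k
    rw [Finset.Nat.sum_antidiagonal_eq_sum_range_succ_mk]
    have hterm : ∀ m ∈ range (k+1), f1 m * f1 (k-m)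
        = x^(2*k+2) * (((k+1).choose m * (k+1).choose (m+1) : ℕ) : ℝ)
          / (((k+1).factorial:ℝ) * (k+1).factorial) := by
      intro m hm
      have hmk : m ≤ k := Nat.lt_succ_iff.mp (Finset.mem_range.mp hm)
      have hA : (((k+1).choose m : ℕ) : ℝ) * m.factorial * (k-m+1).factorial
          = ((k+1).factorial : ℝ) := by
        have h := Nat.choose_mul_factorial_mul_factorial (show m ≤ k+1 by omega)
        rw [show k+1-m = k-m+1 by omega] at h
        exact_mod_cast congrArg (Nat.cast (R := ℝ)) h
      have hB : (((k+1).choose (m+1) : ℕ) : ℝ) * (m+1).factorial * (k-m).factorial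
          = ((k+1).factorial : ℝ) := by
        have h := Nat.choose_mul_factorial_mul_factorial (show m+1 ≤ k+1 by omega)
        rw [show k+1-(m+1) = k-m by omega] at h
        exact_mod_cast congrArg (Nat.cast (R := ℝ)) h
      simp only [hf1]
      have hpow : x^(2*m+1) * x^(2*(k-m)+1) = x^(2*k+2) := by
        rw [← pow_add]
        congr 1
        omega
      have e1 : (k-m)+1 = k-m+1 := rfl
      push_cast
      rw [div_mul_div_comm, hpow]
      rw [div_eq_div_iff (by positivity) (by positivity)]
      push_cast at hA hB
      linear_combination (-(x^(2*k+2)) * (((k+1).choose (m+1) : ℝ) * ((m+1).factorial:ℝ)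
        * ((k-m).factorial:ℝ))) * hA + (-(x^(2*k+2)) * (((k+1).factorial:ℝ))) * hB
    rw [Finset.sum_congr rfl hterm, ← Finset.sum_div, ← Finset.mul_sum]
    congr 2
    rw [← Nat.cast_sum]
    exact_mod_cast congrArg (Nat.cast (R := ℝ)) (vand1 k)
  have hQ : ∀ k : ℕ, ∑ kl ∈ Finset.HasAntidiagonal.antidiagonal k, f0 kl.1 * f2 kl.2
      = x^(2*k+2) * ((2*k+2).choose k : ℝ) / ((k.factorial:ℝ) * (k+2).factorial) := by
    intro k
    rw [Finset.Nat.sum_antidiagonal_eq_sum_range_succ_mk]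
    have hterm : ∀ m ∈ range (k+1), f0 m * f2 (k-m)
        = x^(2*k+2) * ((k.choose m * (k+2).choose m : ℕ) : ℝ)
          / ((k.factorial:ℝ) * (k+2).factorial) := by
      intro m hm
      have hmk : m ≤ k := Nat.lt_succ_iff.mp (Finset.mem_range.mp hm)
      have hA : ((k.choose m : ℕ) : ℝ) * m.factorial * (k-m).factorial
          = (k.factorial : ℝ) := by
        exact_mod_cast congrArg (Nat.cast (R := ℝ)) (Nat.choose_mul_factorial_mul_factorial hmk)
      have hB : (((k+2).choose m : ℕ) : ℝ) * m.factorial * (k-m+2).factorial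
          = ((k+2).factorial : ℝ) := by
        have h := Nat.choose_mul_factorial_mul_factorial (show m ≤ k+2 by omega)
        rw [show k+2-m = k-m+2 by omega] at h
        exact_mod_cast congrArg (Nat.cast (R := ℝ)) h
      simp only [hf0, hf2, Nat.add_zero]
      have hpow : x^(2*m) * x^(2*(k-m)+2) = x^(2*k+2) := by
        rw [← pow_add]
        congr 1
        omega
      push_cast
      rw [div_mul_div_comm, hpow]
      rw [div_eq_div_iff (by positivity) (by positivity)]
      push_cast at hA hB
      linear_combination (-(x^(2*k+2)) * ((((k+2).choose m : ℕ) : ℝ) * ((m).factorial:ℝ)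
        * ((k-m+2).factorial:ℝ))) * hA + (-(x^(2*k+2)) * ((k.factorial:ℝ))) * hB
    rw [Finset.sum_congr rfl hterm, ← Finset.sum_div, ← Finset.mul_sum]
    congr 2
    rw [← Nat.cast_sum]
    exact_mod_cast congrArg (Nat.cast (R := ℝ)) (vand2 k)
  have hlt : ∀ k : ℕ, ∑ kl ∈ Finset.HasAntidiagonal.antidiagonal k, f0 kl.1 * f2 kl.2
      < ∑ kl ∈ Finset.HasAntidiagonal.antidiagonal k, f1 kl.1 * f1 kl.2 := by
    intro k
    rw [hP k, hQ k, mul_div_assoc, mul_div_assoc]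
    apply mul_lt_mul_of_pos_left _ (by positivity)
    apply div_lt_div_of_pos_left
    · exact_mod_cast Nat.choose_pos (show k ≤ 2*k+2 by omega)
    · positivity
    · have h1 : (0:ℝ) < k.factorial := by exact_mod_cast k.factorial_pos
      push_cast [Nat.factorial_succ]
      nlinarith [mul_pos (mul_pos h1 h1) (show (0:ℝ) < (k:ℝ)+1 by positivity)]
  have hsumP : Summable (fun k : ℕ => ∑ kl ∈ Finset.HasAntidiagonal.antidiagonal k, f1 kl.1 * f1 kl.2) :=
    (summable_norm_sum_mul_antidiagonal_of_summable_norm hs1 hs1).of_norm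
  rw [hc0, hc1]
  apply Summable.tsum_lt_tsum_of_nonneg (i := 0)
  · intro k
    rw [hQ k]
    positivity
  · exact fun k => (hlt k).le
  · exact hlt 0
  · exact hsumP
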